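/- Let δ > 0 and let a, b, H be continuous on (-1,-1+δ] with a(x) > 0 for all x ∈ (-1,-1+δ). Assume b⁺ and H⁺ are bounded on (-1,-1+δ). Suppose g ∈ C¹((-1,-1+δ]) satisfies the Riccati-type equation on (-1,-1+δ). Then g(x) ≥ -max{ 4·sup_{(-1,-1+δ)} b⁺, √(8·sup_{(-1,-1+δ)} H⁺), -g(-1+δ) } for all x ∈ (-1,-1+δ). -/
import Mathlib


open Set Filter Topology

/-- Lower bound for C¹ solutions of the Riccati-type equation when a > 0. -/
theorem stmt12 (δ : ℝ) (hδ : 0 < δ) (a b H g g' : ℝ → ℝ)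
    (ha : ContinuousOn a (Ioc (-1 : ℝ) (-1 + δ)))
    (hb : ContinuousOn b (Ioc (-1 : ℝ) (-1 + δ)))
    (hH : ContinuousOn H (Ioc (-1 : ℝ) (-1 + δ)))
    (hapos : ∀ x ∈ Ioo (-1 : ℝ) (-1 + δ), 0 < a x)
    (hbpBdd : BddAbove ((fun x => max (b x) 0) '' Ioo (-1 : ℝ) (-1 + δ)))
    (hHpBdd : BddAbove ((fun x => max (H x) 0) '' Ioo (-1 : ℝ) (-1 + δ)))
    (hg : ∀ x ∈ Ioc (-1 : ℝ) (-1 + δ),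
      HasDerivWithinAt g (g' x) (Ioc (-1 : ℝ) (-1 + δ)) x)
    (hg' : ContinuousOn g' (Ioc (-1 : ℝ) (-1 + δ)))
    (heq : ∀ x ∈ Ioo (-1 : ℝ) (-1 + δ),
      a x * g' x + b x * g x + (1 / 2) * (g x) ^ 2 = H x) :
    ∀ x ∈ Ioo (-1 : ℝ) (-1 + δ),
      -(max (max (4 * sSup ((fun x => max (b x) 0) '' Ioo (-1 : ℝ) (-1 + δ)))
          (Real.sqrt (8 * sSup ((fun x => max (H x) 0) '' Ioo (-1 : ℝ) (-1 + δ)))))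
        (-(g (-1 + δ)))) ≤ g x := by
  set Sb := sSup ((fun x => max (b x) 0) '' Ioo (-1 : ℝ) (-1 + δ)) with hSb
  set SH := sSup ((fun x => max (H x) 0) '' Ioo (-1 : ℝ) (-1 + δ)) with hSH
  set M := max (max (4 * Sb) (Real.sqrt (8 * SH))) (-(g (-1 + δ))) with hM
  intro x₀ hx₀
  by_contra hlt
  push_neg at hlt
  set c : ℝ := (g x₀ + -M) / 2 with hc
  have hc1 : g x₀ < c := by simp only [hc]; linarith
  have hc2 : c < -M := by simp only [hc]; linarith
  have hgend : -M ≤ g (-1 + δ) := by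
    have := le_max_right (max (4 * Sb) (Real.sqrt (8 * SH))) (-(g (-1 + δ)))
    rw [← hM] at this; linarith
  have hgc : ContinuousOn g (Ioc (-1 : ℝ) (-1 + δ)) :=
    fun y hy => (hg y hy).continuousWithinAt
  have hsub : Icc x₀ (-1 + δ) ⊆ Ioc (-1 : ℝ) (-1 + δ) :=
    fun y hy => ⟨lt_of_lt_of_le hx₀.1 hy.1, hy.2⟩
  set S : Set ℝ := Icc x₀ (-1 + δ) ∩ g ⁻¹' (Ici c) with hS
  have hSclosed : IsClosed S :=
    (hgc.mono hsub).preimage_isClosed_of_isClosed isClosed_Icc isClosed_Ici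
  have hSne : S.Nonempty :=
    ⟨-1 + δ, ⟨hx₀.2.le, le_refl _⟩, by simp only [mem_preimage, mem_Ici]; linarith⟩
  have hSbdd : BddBelow S := ⟨x₀, fun y hy => hy.1.1⟩
  set T : ℝ := sInf S with hT
  have hTS : T ∈ S := hSclosed.csInf_mem hSne hSbdd
  have hgTgec : c ≤ g T := hTS.2
  have hTx₀ : x₀ < T := by
    rcases lt_or_eq_of_le hTS.1.1 with h | h
    · exact h
    · exfalso; rw [← h] at hgTgec; linarith
  have hnotS : ∀ y, x₀ ≤ y → y < T → g y < c := by
    intro y hy1 hy2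
    by_contra hge
    push_neg at hge
    have : y ∈ S := ⟨⟨hy1, le_of_lt (lt_of_lt_of_le hy2 hTS.1.2)⟩, hge⟩
    exact absurd (csInf_le hSbdd this) (not_le.mpr hy2)
  have hne : (𝓝[Ioo x₀ T] T).NeBot := right_nhdsWithin_Ioo_neBot hTx₀
  have hIooSub : Ioo x₀ T ⊆ Ioc (-1 : ℝ) (-1 + δ) := fun y hy =>
    ⟨lt_trans hx₀.1 hy.1, le_of_lt (lt_of_lt_of_le hy.2 hTS.1.2)⟩
  have hgTle : g T ≤ c := by
    have htend : Tendsto g (𝓝[Ioo x₀ T] T) (𝓝 (g T)) :=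
      ((hgc T (hsub hTS.1)).mono hIooSub).tendsto
    refine le_of_tendsto htend ?_
    filter_upwards [eventually_mem_nhdsWithin] with y hy
    exact (hnotS y hy.1.le hy.2).le
  have hTlt : T < -1 + δ := by
    rcases lt_or_eq_of_le hTS.1.2 with h | h
    · exact h
    · exfalso; rw [h] at hgTle; linarith
  have hTmem : T ∈ Ioo (-1 : ℝ) (-1 + δ) := ⟨lt_trans hx₀.1 hTx₀, hTlt⟩
  -- bounds on sups
  have hbmem : max (b T) 0 ≤ Sb := le_csSup hbpBdd ⟨T, hTmem, rfl⟩
  have hHmem : max (H T) 0 ≤ SH := le_csSup hHpBdd ⟨T, hTmem, rfl⟩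
  have hbT : b T ≤ Sb := le_trans (le_max_left _ _) hbmem
  have hHT : H T ≤ SH := le_trans (le_max_left _ _) hHmem
  have hSH0 : 0 ≤ SH := le_trans (le_max_right (H T) 0) hHmem
  have hMSb : 4 * Sb ≤ M := le_trans (le_max_left _ _) (le_max_left _ _)
  have hMsqrt : Real.sqrt (8 * SH) ≤ M :=
    le_trans (le_max_right _ _) (le_max_left _ _)
  have hM0 : 0 ≤ M := le_trans (Real.sqrt_nonneg _) hMsqrt
  have hMsq : 8 * SH ≤ M ^ 2 := by
    have h1 : (Real.sqrt (8 * SH)) ^ 2 = 8 * SH := Real.sq_sqrt (by linarith)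
    calc 8 * SH = (Real.sqrt (8 * SH)) ^ 2 := h1.symm
    _ ≤ M ^ 2 := by nlinarith [Real.sqrt_nonneg (8 * SH)]
  -- derivative negative at T
  have heqT := heq T hTmem
  have haT := hapos T hTmem
  set t : ℝ := -g T with ht
  have htM : M < t := by simp only [ht]; linarith
  have hderiv : a T * g' T < 0 := by
    have hbt : b T * t ≤ Sb * t := mul_le_mul_of_nonneg_right hbT (by linarith)
    have hgTt : g T = -t := by simp [ht]
    rw [hgTt] at heqT
    nlinarith
  have hg'T : g' T < 0 := by nlinarith
  -- slope argument
  have hslope := (hasDerivWithinAt_iff_tendsto_slope).1 (hg T (hsub hTS.1))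
  have hev : ∀ᶠ y in 𝓝[Ioc (-1 : ℝ) (-1 + δ) \ {T}] T, slope g T y < 0 :=
    hslope.eventually (gt_mem_nhds hg'T)
  have hIooSub' : Ioo x₀ T ⊆ Ioc (-1 : ℝ) (-1 + δ) \ {T} := fun y hy =>
    ⟨hIooSub hy, by simp [ne_of_lt hy.2]⟩
  have hev2 : ∀ᶠ y in 𝓝[Ioo x₀ T] T, slope g T y < 0 :=
    hev.filter_mono (nhdsWithin_mono T hIooSub')
  obtain ⟨y, hy1, hy2⟩ := (hev2.and eventually_mem_nhdsWithin).exists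
  have hyT : y - T < 0 := by linarith [hy2.2]
  have hslopeval : slope g T y = (g y - g T) / (y - T) := slope_def_field g T y
  rw [hslopeval] at hy1
  have hgy : g T < g y := by
    rcases div_neg_iff.mp hy1 with ⟨h1, h2⟩ | ⟨h1, h2⟩
    · linarith
    · linarith
  exact absurd (hnotS y hy2.1.le hy2.2) (by linarith)
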